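/- Let φ : (0,∞) → [0,∞) be a nonincreasing, right-continuous function, and let B₀ > 0, δ₀ > 0 be constants such that r·φ(s+r) ≤ B₀·φ(s)^{1+δ₀} for every s > 0 and every r ∈ [0,1]. If s₀ > 0 satisfies φ(s₀)^{δ₀} ≤ 1/(2B₀), then φ(s) = 0 for every s > s₀ + 1/(1 − 2^{−δ₀}). -/

import Mathlib

/-- Quantitative De Giorgi iteration lemma: if `φ : (0,∞) → [0,∞)` is nonincreasing,
right-continuous, satisfies `r·φ(s+r) ≤ B₀·φ(s)^(1+δ₀)` for all `s > 0`, `r ∈ [0,1]`,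
and `φ(s₀)^δ₀ ≤ 1/(2B₀)` at some level `s₀ > 0`, then `φ(s) = 0` for all
`s > s₀ + 1/(1 - 2^(-δ₀))`. -/
theorem deGiorgi_iteration_quantitative (φ : ℝ → ℝ) (B₀ δ₀ s₀ : ℝ)
    (hB₀ : 0 < B₀) (hδ₀ : 0 < δ₀) (hs₀ : 0 < s₀)
    (hnonneg : ∀ s : ℝ, 0 < s → 0 ≤ φ s)
    (hmono : ∀ s t : ℝ, 0 < s → s ≤ t → φ t ≤ φ s)
    (hrc : ∀ s : ℝ, 0 < s → ContinuousWithinAt φ (Set.Ici s) s)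
    (hrec : ∀ s r : ℝ, 0 < s → 0 ≤ r → r ≤ 1 →
      r * φ (s + r) ≤ B₀ * φ s ^ (1 + δ₀))
    (hstart : φ s₀ ^ δ₀ ≤ 1 / (2 * B₀)) :
    ∀ s : ℝ, s₀ + 1 / (1 - (2 : ℝ) ^ (-δ₀)) < s → φ s = 0 := by
  intro s hs
  set c : ℝ := (2 : ℝ) ^ (-δ₀) with hc_def
  have hc0 : 0 < c := Real.rpow_pos_of_pos two_pos _
  have hc1 : c < 1 := Real.rpow_lt_one_of_one_lt_of_neg one_lt_two (by linarith)
  have h1c : 0 < 1 - c := by linarith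
  set σ : ℕ → ℝ := fun j => s₀ + ∑ i ∈ Finset.range j, c ^ i with hσ
  have hσpos : ∀ j, 0 < σ j := by
    intro j
    have : 0 ≤ ∑ i ∈ Finset.range j, c ^ i :=
      Finset.sum_nonneg fun i _ => pow_nonneg hc0.le i
    simp only [hσ]
    linarith
  have hσle : ∀ j, σ j ≤ s₀ + 1 / (1 - c) := by
    intro j
    have hgeom : ∑ i ∈ Finset.range j, c ^ i = (c ^ j - 1) / (c - 1) :=
      geom_sum_eq (by linarith) j
    have hcj : 0 ≤ c ^ j := pow_nonneg hc0.le j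
    have : (c ^ j - 1) / (c - 1) ≤ 1 / (1 - c) := by
      rw [show (c ^ j - 1) / (c - 1) = (1 - c ^ j) / (1 - c) by
        rw [← neg_div_neg_eq]; ring_nf]
      rw [div_le_div_iff₀ h1c h1c]
      nlinarith
    simp only [hσ]
    linarith [hgeom ▸ this]
  have hσsucc : ∀ j, σ (j + 1) = σ j + c ^ j := by
    intro j
    simp only [hσ, Finset.sum_range_succ]
    ring
  have key : ∀ j, φ (σ j) ^ δ₀ ≤ c ^ j / (2 * B₀) := by
    intro j
    induction j with
    | zero => simpa [hσ] using hstart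
    | succ j ih =>
      have hr0 : (0 : ℝ) < c ^ j := pow_pos hc0 j
      have hr1 : c ^ j ≤ 1 := pow_le_one₀ hc0.le hc1.le
      have hstep := hrec (σ j) (c ^ j) (hσpos j) hr0.le hr1
      have hnn : 0 ≤ φ (σ j) := hnonneg _ (hσpos j)
      have hexp : φ (σ j) ^ (1 + δ₀) = φ (σ j) * φ (σ j) ^ δ₀ := by
        rw [Real.rpow_add' hnn (by positivity), Real.rpow_one]
      rw [hexp] at hstep
      have hmul : B₀ * (φ (σ j) * φ (σ j) ^ δ₀) ≤ B₀ * (φ (σ j) * (c ^ j / (2 * B₀))) := by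
        have := mul_le_mul_of_nonneg_left ih hnn
        exact mul_le_mul_of_nonneg_left this hB₀.le
      have hBsimp : B₀ * (φ (σ j) * (c ^ j / (2 * B₀))) = c ^ j * (φ (σ j) / 2) := by
        field_simp
      have h2 : φ (σ j + c ^ j) ≤ φ (σ j) / 2 := by
        have : c ^ j * φ (σ j + c ^ j) ≤ c ^ j * (φ (σ j) / 2) := by
          calc c ^ j * φ (σ j + c ^ j) ≤ B₀ * (φ (σ j) * φ (σ j) ^ δ₀) := hstep
            _ ≤ B₀ * (φ (σ j) * (c ^ j / (2 * B₀))) := hmul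
            _ = c ^ j * (φ (σ j) / 2) := hBsimp
        exact (mul_le_mul_iff_right₀ hr0).mp this
      have hpow : φ (σ (j + 1)) ^ δ₀ ≤ (φ (σ j) / 2) ^ δ₀ := by
        rw [hσsucc j]
        exact Real.rpow_le_rpow (hnonneg _ (by rw [← hσsucc j]; exact hσpos (j + 1))) h2 hδ₀.le
      have hsplit : (φ (σ j) / 2) ^ δ₀ = φ (σ j) ^ δ₀ * c := by
        rw [Real.div_rpow hnn (by norm_num : (0:ℝ) ≤ 2), hc_def,
          Real.rpow_neg (by norm_num : (0:ℝ) ≤ 2), div_eq_mul_inv]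
      calc φ (σ (j + 1)) ^ δ₀ ≤ (φ (σ j) / 2) ^ δ₀ := hpow
        _ = φ (σ j) ^ δ₀ * c := hsplit
        _ ≤ (c ^ j / (2 * B₀)) * c := mul_le_mul_of_nonneg_right ih hc0.le
        _ = c ^ (j + 1) / (2 * B₀) := by ring
  have hspos : 0 < s := by
    have : 0 < 1 / (1 - c) := by positivity
    linarith
  have hfs : ∀ j, φ s ^ δ₀ ≤ c ^ j / (2 * B₀) := by
    intro j
    have hmle : φ s ≤ φ (σ j) := hmono (σ j) s (hσpos j) ((hσle j).trans hs.le)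
    exact (Real.rpow_le_rpow (hnonneg s hspos) hmle hδ₀.le).trans (key j)
  have htend : Filter.Tendsto (fun j => c ^ j / (2 * B₀)) Filter.atTop (nhds 0) := by
    have := (tendsto_pow_atTop_nhds_zero_of_lt_one hc0.le hc1).div_const (2 * B₀)
    simpa using this
  have h0 : φ s ^ δ₀ ≤ 0 := ge_of_tendsto' htend hfs
  have hz : φ s ^ δ₀ = 0 := le_antisymm h0 (Real.rpow_nonneg (hnonneg s hspos) δ₀)
  exact (Real.rpow_eq_zero (hnonneg s hspos) (ne_of_gt hδ₀)).mp hz
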